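/- arXiv:1204.2355 — 2 statements merged into one kernel-verified Lean document; each statement's English description precedes it below -/
import Mathlib

section
/- Let β ∈ (0,1), c > 0, and for each n define S_n = Σ_{k=p}^{n} exp(−c · (2β⁴)^{k+1} / (n² β^{4n})). If β⁴ < 1/2, then S_n ≤ (1 + o(1)) · exp(−c β⁴ · 2^{n+1}/n²) as n → ∞; in particular S_n → 0 superexponentially fast, i.e. (1/2^n) log S_n is bounded above by a negative constant times 1/n² asymptotically. -/
open Filter Real

/-- asymptotic bound for the sum `S_n = Σ_{k=p}^n exp(−c(2β⁴)^{k+1}/(n²β^{4n}))`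
when `β⁴ < 1/2`: the sum is dominated by its largest term, and `(1/2^n) log S_n` is
eventually bounded by a negative constant times `1/n²`. -/
theorem stmt6 (β c : ℝ) (hβ0 : 0 < β) (hβ1 : β < 1) (hc : 0 < c) (p : ℕ) (hp : 1 ≤ p)
    (S : ℕ → ℝ)
    (hS : ∀ n, S n = ∑ k ∈ Finset.Icc p n,
      Real.exp (-c * (2 * β ^ 4) ^ (k + 1) / ((n : ℝ) ^ 2 * β ^ (4 * n))))
    (hβ4 : β ^ 4 < 1 / 2) :
    (∃ e : ℕ → ℝ, Tendsto e atTop (nhds 0) ∧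
      ∀ᶠ n in atTop, S n ≤ (1 + e n) * Real.exp (-c * β ^ 4 * 2 ^ (n + 1) / (n : ℝ) ^ 2)) ∧
    ∃ K > (0 : ℝ), ∀ᶠ n in atTop,
      (1 / 2 ^ n : ℝ) * Real.log (S n) ≤ -K / (n : ℝ) ^ 2 := by
  have hb4 : (0:ℝ) < β ^ 4 := pow_pos hβ0 4
  set c' : ℝ := c * (1 - 2 * β ^ 4) with hc'def
  have hc'0 : 0 < c' := mul_pos hc (by linarith)
  set E : ℕ → ℝ := fun n => n * Real.exp (-(c' * 2 ^ n) / (n : ℝ) ^ 2) with hEdef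
  -- eventually n^3 ≤ 2^n
  have hcube : ∀ᶠ n : ℕ in atTop, ((n:ℝ))^3 ≤ 2 ^ n := by
    have h := tendsto_pow_const_mul_const_pow_of_lt_one 3
      (by norm_num : (0:ℝ) ≤ 1/2) (by norm_num : (1:ℝ)/2 < 1)
    filter_upwards [h.eventually (eventually_le_nhds (by norm_num : (0:ℝ) < 1))] with n hn
    have h2 : (0:ℝ) < 2 ^ n := by positivity
    have : ((n:ℝ))^3 * ((1:ℝ)/2)^n = (n:ℝ)^3 / 2^n := by
      rw [div_pow, one_pow]; ring
    rw [this, div_le_one h2] at hn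
    simpa using hn
  -- E tends to 0
  have hE0 : Tendsto E atTop (nhds 0) := by
    have hr1 : Real.exp (-c') < 1 := Real.exp_lt_one_iff.mpr (by linarith)
    have hmain := tendsto_self_mul_const_pow_of_lt_one (Real.exp_pos (-c')).le hr1
    apply tendsto_of_tendsto_of_tendsto_of_le_of_le' tendsto_const_nhds hmain
    · filter_upwards with n
      have : 0 ≤ Real.exp (-(c' * 2 ^ n) / (n : ℝ) ^ 2) := (Real.exp_pos _).le
      positivity
    · filter_upwards [hcube, eventually_ge_atTop 1] with n hn hn1
      have hn0 : (0:ℝ) < (n:ℝ) := by exact_mod_cast hn1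
      have hn2 : (0:ℝ) < (n:ℝ)^2 := by positivity
      have hexp : Real.exp (-(c' * 2 ^ n) / (n : ℝ) ^ 2) ≤ Real.exp (-c') ^ n := by
        rw [← Real.exp_nat_mul]
        apply Real.exp_le_exp.mpr
        rw [div_le_iff₀ hn2]
        have : (n:ℝ) * (n:ℝ)^2 = (n:ℝ)^3 := by ring
        nlinarith [mul_le_mul_of_nonneg_left hn hc'0.le]
      simpa [hEdef] using mul_le_mul_of_nonneg_left hexp hn0.le
  -- key per-term bound
  have hterm : ∀ n k : ℕ, 1 ≤ n → k + 1 ≤ n →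
      Real.exp (-c * (2 * β ^ 4) ^ (k + 1) / ((n : ℝ) ^ 2 * β ^ (4 * n)))
        ≤ Real.exp (-c * β ^ 4 * 2 ^ (n + 1) / (n : ℝ) ^ 2)
          * Real.exp (-(c' * 2 ^ n) / (n : ℝ) ^ 2) := by
    intro n k hn1 hkn
    rw [← Real.exp_add]
    apply Real.exp_le_exp.mpr
    have hn0 : (0:ℝ) < (n:ℝ) := by exact_mod_cast hn1
    have hn2 : (0:ℝ) < (n:ℝ)^2 := by positivity
    have hβn : (0:ℝ) < β ^ (4*n) := pow_pos hβ0 _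
    -- main numerator inequality: 2^n ≤ (2β⁴)^(k+1) / β^(4n)
    obtain ⟨m, hm⟩ : ∃ m, n = (k+1) + m := ⟨n - (k+1), by omega⟩
    have h1 : (2:ℝ)^n ≤ (2*β^4)^(k+1) / β^(4*n) := by
      rw [le_div_iff₀ hβn]
      have e1 : β ^ (4*n) = (β^4)^(k+1) * (β^4)^m := by
        rw [← pow_add, ← pow_mul]; congr 1; omega
      have e2 : (2:ℝ)^n = 2^(k+1) * 2^m := by rw [← pow_add]; congr 1
      have e3 : ((2:ℝ)*β^4)^(k+1) = 2^(k+1) * (β^4)^(k+1) := mul_pow _ _ _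
      have h4 : ((β:ℝ)^4)^m ≤ ((1:ℝ)/2)^m :=
        pow_le_pow_left₀ hb4.le hβ4.le m
      have h5 : (2:ℝ)^m * ((1:ℝ)/2)^m = 1 := by
        rw [← mul_pow]; norm_num
      have hpos : (0:ℝ) < 2^(k+1) := by positivity
      calc (2:ℝ)^n * β^(4*n) = (2^(k+1) * (β^4)^(k+1)) * (2^m * (β^4)^m) := by
            rw [e1, e2]; ring
        _ ≤ (2^(k+1) * (β^4)^(k+1)) * (2^m * ((1:ℝ)/2)^m) := by
            have : (0:ℝ) ≤ 2^(k+1) * (β^4)^(k+1) := by positivity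
            have : (0:ℝ) ≤ (2:ℝ)^m := by positivity
            gcongr
        _ = (2*β^4)^(k+1) := by rw [h5, e3]; ring
    -- put over common denominator n²
    have lhs_eq : -c * (2 * β ^ 4) ^ (k + 1) / ((n : ℝ) ^ 2 * β ^ (4 * n))
        = (-c * ((2*β^4)^(k+1) / β^(4*n))) / (n:ℝ)^2 := by
      field_simp
    have rhs_eq : -c * β ^ 4 * 2 ^ (n + 1) / (n : ℝ) ^ 2 + -(c' * 2 ^ n) / (n : ℝ) ^ 2
        = (-c * β^4 * 2^(n+1) + -(c' * 2^n)) / (n:ℝ)^2 := by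
      rw [← add_div]
    rw [lhs_eq, rhs_eq, div_le_div_iff₀ hn2 hn2]
    have hnum : -c * ((2*β^4)^(k+1) / β^(4*n)) ≤ -c * β^4 * 2^(n+1) + -(c' * 2^n) := by
      have h6 : c * 2^n ≤ c * ((2*β^4)^(k+1) / β^(4*n)) :=
        mul_le_mul_of_nonneg_left h1 hc.le
      have e4 : -c * β^4 * 2^(n+1) + -(c' * 2^n) = -(c * 2^n) := by
        rw [hc'def, pow_succ]; ring
      rw [e4]; linarith
    nlinarith [hnum, hn2]
  -- main estimate
  have hmain : ∀ n : ℕ, p ≤ n →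
      S n ≤ (1 + E n) * Real.exp (-c * β ^ 4 * 2 ^ (n + 1) / (n : ℝ) ^ 2) := by
    intro n hpn
    have hn1 : 1 ≤ n := le_trans hp hpn
    obtain ⟨m, rfl⟩ : ∃ m, n = m + 1 := ⟨n - 1, by omega⟩
    set n := m + 1
    have hn0 : (0:ℝ) < (n:ℝ) := by exact_mod_cast hn1
    have hn2 : (0:ℝ) < (n:ℝ)^2 := by positivity
    have hβn : (0:ℝ) < β ^ (4*n) := pow_pos hβ0 _
    rw [hS, Finset.sum_Icc_succ_top hpn]
    have htop : Real.exp (-c * (2 * β ^ 4) ^ (m + 1 + 1) / ((n : ℝ) ^ 2 * β ^ (4 * n)))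
        = Real.exp (-c * β ^ 4 * 2 ^ (n + 1) / (n : ℝ) ^ 2) := by
      congr 1
      have e1 : ((2:ℝ)*β^4)^(n+1) = 2^(n+1) * ((β^4)^n * β^4) := by
        rw [mul_pow]; ring
      have e2 : β ^ (4*n) = (β^4)^n := by rw [pow_mul]
      rw [e1, e2]
      have h4 : ((β:ℝ)^4)^n ≠ 0 := by positivity
      field_simp
    rw [htop]
    have hsum : (∑ k ∈ Finset.Icc p m,
        Real.exp (-c * (2 * β ^ 4) ^ (k + 1) / ((n : ℝ) ^ 2 * β ^ (4 * n))))
        ≤ (n:ℝ) * (Real.exp (-c * β ^ 4 * 2 ^ (n + 1) / (n : ℝ) ^ 2)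
            * Real.exp (-(c' * 2 ^ n) / (n : ℝ) ^ 2)) := by
      calc (∑ k ∈ Finset.Icc p m,
            Real.exp (-c * (2 * β ^ 4) ^ (k + 1) / ((n : ℝ) ^ 2 * β ^ (4 * n))))
          ≤ (Finset.Icc p m).card •
            (Real.exp (-c * β ^ 4 * 2 ^ (n + 1) / (n : ℝ) ^ 2)
              * Real.exp (-(c' * 2 ^ n) / (n : ℝ) ^ 2)) := by
            apply Finset.sum_le_card_nsmul
            intro k hk
            have hkm : k ≤ m := (Finset.mem_Icc.mp hk).2
            exact hterm n k hn1 (by omega)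
        _ ≤ (n:ℝ) * (Real.exp (-c * β ^ 4 * 2 ^ (n + 1) / (n : ℝ) ^ 2)
              * Real.exp (-(c' * 2 ^ n) / (n : ℝ) ^ 2)) := by
            rw [nsmul_eq_mul]
            apply mul_le_mul_of_nonneg_right _ (by positivity)
            rw [Nat.card_Icc]
            exact_mod_cast Nat.cast_le.mpr (by omega : m + 1 - p ≤ n)
    calc _ ≤ (n:ℝ) * (Real.exp (-c * β ^ 4 * 2 ^ (n + 1) / (n : ℝ) ^ 2)
            * Real.exp (-(c' * 2 ^ n) / (n : ℝ) ^ 2))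
          + Real.exp (-c * β ^ 4 * 2 ^ (n + 1) / (n : ℝ) ^ 2) := by linarith
      _ = (1 + E n) * Real.exp (-c * β ^ 4 * 2 ^ (n + 1) / (n : ℝ) ^ 2) := by
          simp only [hEdef]; ring
  constructor
  · exact ⟨E, hE0, eventually_atTop.mpr ⟨p, hmain⟩⟩
  · refine ⟨c * β^4, by positivity, ?_⟩
    have hlog2 : ∀ᶠ n : ℕ in atTop, Real.log 2 * (n:ℝ)^2 ≤ c * β^4 * 2^n := by
      have h := tendsto_pow_const_mul_const_pow_of_lt_one 2
        (by norm_num : (0:ℝ) ≤ 1/2) (by norm_num : (1:ℝ)/2 < 1)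
      have hpos : (0:ℝ) < c * β^4 / Real.log 2 :=
        div_pos (by positivity) (Real.log_pos (by norm_num))
      filter_upwards [h.eventually (eventually_le_nhds hpos)] with n hn
      have h2 : (0:ℝ) < 2 ^ n := by positivity
      have hl2 : (0:ℝ) < Real.log 2 := Real.log_pos (by norm_num)
      have : ((n:ℝ))^2 * ((1:ℝ)/2)^n = (n:ℝ)^2 / 2^n := by
        rw [div_pow, one_pow]; ring
      rw [this, div_le_div_iff₀ h2 hl2] at hn
      linarith
    have hE1 : ∀ᶠ n : ℕ in atTop, E n ≤ 1 :=
      hE0.eventually (eventually_le_nhds (by norm_num : (0:ℝ) < 1))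
    filter_upwards [hlog2, hE1, eventually_ge_atTop p] with n hlog hE1n hpn
    have hn1 : 1 ≤ n := le_trans hp hpn
    have hn0 : (0:ℝ) < (n:ℝ) := by exact_mod_cast hn1
    have hn2 : (0:ℝ) < (n:ℝ)^2 := by positivity
    have h2n : (0:ℝ) < (2:ℝ)^n := by positivity
    have hSpos : 0 < S n := by
      rw [hS]
      apply Finset.sum_pos (fun k _ => Real.exp_pos _)
      exact ⟨n, Finset.mem_Icc.mpr ⟨hpn, le_refl n⟩⟩
    have hSle : S n ≤ 2 * Real.exp (-c * β ^ 4 * 2 ^ (n + 1) / (n : ℝ) ^ 2) := by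
      have := hmain n hpn
      have hexp : (0:ℝ) < Real.exp (-c * β ^ 4 * 2 ^ (n + 1) / (n : ℝ) ^ 2) := Real.exp_pos _
      nlinarith
    have hlogS : Real.log (S n) ≤ Real.log 2 + (-c * β ^ 4 * 2 ^ (n + 1) / (n : ℝ) ^ 2) := by
      calc Real.log (S n) ≤ Real.log (2 * Real.exp (-c * β ^ 4 * 2 ^ (n + 1) / (n : ℝ) ^ 2)) :=
            Real.log_le_log hSpos hSle
        _ = Real.log 2 + (-c * β ^ 4 * 2 ^ (n + 1) / (n : ℝ) ^ 2) := by
            rw [Real.log_mul (by norm_num) (Real.exp_ne_zero _), Real.log_exp]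
    have key : Real.log 2 + (-c * β ^ 4 * 2 ^ (n + 1) / (n : ℝ) ^ 2)
        ≤ (2:ℝ)^n * (-(c * β^4) / (n:ℝ)^2) := by
      have h4 : (0:ℝ) ≤ (c * β^4 * 2^n - Real.log 2 * (n:ℝ)^2) / (n:ℝ)^2 :=
        div_nonneg (by linarith) hn2.le
      have h5 : (2:ℝ)^n * (-(c * β^4) / (n:ℝ)^2)
          - (Real.log 2 + (-c * β ^ 4 * 2 ^ (n + 1) / (n : ℝ) ^ 2))
          = (c * β^4 * 2^n - Real.log 2 * (n:ℝ)^2) / (n:ℝ)^2 := by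
        rw [pow_succ]
        field_simp
        ring
      linarith
    calc (1 / 2 ^ n : ℝ) * Real.log (S n)
        ≤ (1 / 2 ^ n : ℝ) * (Real.log 2 + (-c * β ^ 4 * 2 ^ (n + 1) / (n : ℝ) ^ 2)) := by
          apply mul_le_mul_of_nonneg_left hlogS (by positivity)
      _ ≤ (1 / 2 ^ n : ℝ) * ((2:ℝ)^n * (-(c * β^4) / (n:ℝ)^2)) := by
          apply mul_le_mul_of_nonneg_left key (by positivity)
      _ = -(c * β^4) / (n:ℝ)^2 := by
          rw [← mul_assoc, one_div, inv_mul_cancel₀ (ne_of_gt h2n), one_mul]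
      _ = -(c * β^4) / (n:ℝ)^2 := rfl
end

section
/- Let ε be a centered real random variable with sub-Gaussian parameter φ (E[exp(tε)] ≤ exp(φt²/2) for all t), let R > 0, and define ε^{(R)} = ε·1_{|ε|≤R} − E[ε·1_{|ε|≤R}]. Suppose additionally E[exp(t|ε|^{2a})] < ∞ for some a > 2 and t > 0. Then there is a function κ_R with κ_R → 0 as R → ∞ such that E[exp(t(ε − ε^{(R)}))] ≤ exp(κ_R t²/2) for all t ∈ ℝ and all sufficiently large R. -/
open MeasureTheory Filter Real


lemma exp_le_quad_of_nonpos {x : ℝ} (hx : x ≤ 0) : Real.exp x ≤ 1 + x + x ^ 2 / 2 := by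
  have key : AntitoneOn (fun z => 1 + z + z ^ 2 / 2 - Real.exp z) (Set.Iic (0:ℝ)) := by
    apply antitoneOn_of_deriv_nonpos (convex_Iic 0)
    · fun_prop
    · intro y hy
      exact (by fun_prop : Differentiable ℝ (fun z => 1 + z + z ^ 2 / 2 - Real.exp z)).differentiableAt.differentiableWithinAt
    · intro y hy
      have h : HasDerivAt (fun z => 1 + z + z ^ 2 / 2 - Real.exp z) (1 + y - Real.exp y) y := by
        have := ((hasDerivAt_id y).const_add 1).add
          (((hasDerivAt_pow 2 y)).div_const 2) |>.sub (Real.hasDerivAt_exp y)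
        refine this.congr_deriv ?_
        simp; try ring
      rw [h.deriv]
      have := Real.add_one_le_exp y
      linarith
  have := key (Set.mem_Iic.2 hx) (Set.mem_Iic.2 (le_refl (0:ℝ))) hx
  simp at this
  linarith

lemma exp_ge_lin (y : ℝ) (hy : 0 ≤ y) : 0 ≤ Real.exp y * (y - 1) + 1 := by
  have key : MonotoneOn (fun z => Real.exp z * (z - 1) + 1) (Set.Ici (0:ℝ)) := by
    apply monotoneOn_of_deriv_nonneg (convex_Ici 0)
    · fun_prop
    · intro z hz
      exact (by fun_prop : Differentiable ℝ (fun z => Real.exp z * (z - 1) + 1)).differentiableAt.differentiableWithinAt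
    · intro z hz
      have h : HasDerivAt (fun z => Real.exp z * (z - 1) + 1) (Real.exp z * z) z := by
        have := ((Real.hasDerivAt_exp z).mul ((hasDerivAt_id z).sub_const 1)).add_const 1
        refine this.congr_deriv ?_
        simp; try ring
      rw [h.deriv]
      have hz' : 0 ≤ z := le_of_lt (by simpa using hz)
      positivity
  have := key (Set.mem_Ici.2 (le_refl (0:ℝ))) (Set.mem_Ici.2 hy) hy
  simpa using this

lemma exp_le_taylor (x : ℝ) : Real.exp x ≤ 1 + x + x ^ 2 / 2 * Real.exp |x| := by
  rcases le_or_gt x 0 with h | h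
  · have := exp_le_quad_of_nonpos h
    have h1 : (1:ℝ) ≤ Real.exp |x| := Real.one_le_exp (abs_nonneg x)
    nlinarith [sq_nonneg x]
  · rw [abs_of_pos h]
    have key : MonotoneOn (fun z => 1 + z + z ^ 2 / 2 * Real.exp z - Real.exp z) (Set.Ici (0:ℝ)) := by
      apply monotoneOn_of_deriv_nonneg (convex_Ici 0)
      · fun_prop
      · intro z hz
        exact (by fun_prop : Differentiable ℝ (fun z => 1 + z + z ^ 2 / 2 * Real.exp z - Real.exp z)).differentiableAt.differentiableWithinAt
      · intro z hz
        have hd : HasDerivAt (fun z => 1 + z + z ^ 2 / 2 * Real.exp z - Real.exp z)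
            (1 + (z * Real.exp z + z ^ 2 / 2 * Real.exp z) - Real.exp z) z := by
          have := (((hasDerivAt_id z).const_add 1).add
            (((hasDerivAt_pow 2 z).div_const 2).mul (Real.hasDerivAt_exp z))).sub (Real.hasDerivAt_exp z)
          refine this.congr_deriv ?_
          simp; try ring
        rw [hd.deriv]
        have hz' : 0 ≤ z := le_of_lt (by simpa using hz)
        have h1 := exp_ge_lin z hz'
        have h2 := Real.exp_pos z
        nlinarith [sq_nonneg z]
    have := key (Set.mem_Ici.2 (le_refl (0:ℝ))) (Set.mem_Ici.2 h.le) h.le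
    simp at this
    linarith


lemma growth_sq (t₀ p γ : ℝ) (ht₀ : 0 < t₀) (hp : 2 < p) (hγ : 0 ≤ γ) :
    ∃ K, 0 ≤ K ∧ ∀ y : ℝ, 0 ≤ y → γ * y ^ 2 ≤ t₀ * y ^ p + K := by
  set M : ℝ := max 1 ((γ/t₀) ^ (1/(p-2))) with hM
  have hM1 : (1:ℝ) ≤ M := le_max_left _ _
  have hM0 : (0:ℝ) < M := lt_of_lt_of_le one_pos hM1
  refine ⟨γ * M ^ 2, by positivity, fun y hy => ?_⟩
  rcases le_or_gt y M with h | h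
  · have hyM : y ^ 2 ≤ M ^ 2 := by nlinarith
    have h1 : γ * y ^ 2 ≤ γ * M ^ 2 := mul_le_mul_of_nonneg_left hyM hγ
    have h2 : 0 ≤ t₀ * y ^ p := by positivity
    linarith
  · have hy0 : (0:ℝ) < y := lt_trans hM0 h
    have hexp : 0 < p - 2 := by linarith
    have key : γ ≤ t₀ * y ^ (p - 2) := by
      have h1 : (γ/t₀) ^ (1/(p-2)) ≤ y := le_trans (le_max_right _ _) h.le
      have h2 : ((γ/t₀) ^ (1/(p-2))) ^ (p-2) ≤ y ^ (p-2) :=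
        Real.rpow_le_rpow (Real.rpow_nonneg (by positivity) _) h1 hexp.le
      rw [← Real.rpow_mul (by positivity), one_div, inv_mul_cancel₀ (ne_of_gt hexp),
        Real.rpow_one] at h2
      calc γ = t₀ * (γ / t₀) := by field_simp
        _ ≤ t₀ * y ^ (p - 2) := mul_le_mul_of_nonneg_left h2 ht₀.le
    have hsplit : y ^ p = y ^ (p - 2) * y ^ 2 := by
      rw [← Real.rpow_natCast y 2, ← Real.rpow_add hy0]
      norm_num
    have h3 : γ * y ^ 2 ≤ t₀ * y ^ p := by
      rw [hsplit]
      have := mul_le_mul_of_nonneg_right key (sq_nonneg y)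
      nlinarith
    have : (0:ℝ) ≤ γ * M ^ 2 := by positivity
    linarith

lemma domB (t₀ p c C : ℝ) (ht₀ : 0 < t₀) (hp : 2 < p) (hc : 0 ≤ c) (hC : 0 ≤ C) :
    ∃ K, 0 ≤ K ∧ ∀ y : ℝ, 0 ≤ y →
      (y + C) ^ 2 * Real.exp (c * (y + C) ^ 2) ≤ K * Real.exp (t₀ * y ^ p) := by
  obtain ⟨K₀, hK₀, hK⟩ := growth_sq t₀ p (2 * (c + 1)) ht₀ hp (by linarith)
  refine ⟨Real.exp (K₀ + 2 * (c + 1) * C ^ 2 + 1), (Real.exp_pos _).le, fun y hy => ?_⟩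
  set u : ℝ := y + C with hu
  have hu0 : 0 ≤ u := by positivity
  have h1 : u ^ 2 ≤ Real.exp (2 * u) := by
    have := Real.add_one_le_exp u
    have h2 : u ≤ Real.exp u := by linarith
    calc u ^ 2 = u * u := sq u
      _ ≤ Real.exp u * Real.exp u := by nlinarith [Real.exp_pos u]
      _ = Real.exp (2 * u) := by rw [← Real.exp_add]; ring_nf
  have h2 : u ^ 2 * Real.exp (c * u ^ 2) ≤ Real.exp (2 * u + c * u ^ 2) := by
    rw [Real.exp_add]
    exact mul_le_mul_of_nonneg_right h1 (Real.exp_pos _).le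
  have h3 : 2 * u + c * u ^ 2 ≤ (c + 1) * u ^ 2 + 1 := by nlinarith [sq_nonneg (u - 1)]
  have hu2 : u ^ 2 ≤ 2 * y ^ 2 + 2 * C ^ 2 := by rw [hu]; nlinarith [sq_nonneg (y - C)]
  have h4 : (c + 1) * u ^ 2 ≤ (c+1) * (2 * y ^ 2 + 2 * C ^ 2) :=
    mul_le_mul_of_nonneg_left hu2 (by linarith)
  have h5 := hK y hy
  have hfin : 2 * u + c * u ^ 2 ≤ t₀ * y ^ p + (K₀ + 2 * (c + 1) * C ^ 2 + 1) := by nlinarith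
  calc u ^ 2 * Real.exp (c * u ^ 2) ≤ Real.exp (2 * u + c * u ^ 2) := h2
    _ ≤ Real.exp (t₀ * y ^ p + (K₀ + 2 * (c + 1) * C ^ 2 + 1)) := Real.exp_le_exp.2 hfin
    _ = Real.exp (K₀ + 2 * (c + 1) * C ^ 2 + 1) * Real.exp (t₀ * y ^ p) := by
        rw [← Real.exp_add]; ring_nf

lemma lemA {Ω : Type*} {m0 : MeasurableSpace Ω} (μ : Measure Ω) [IsProbabilityMeasure μ]
    (η : Ω → ℝ) (hηm : AEStronglyMeasurable η μ) (hη1 : Integrable η μ)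
    (hmean : ∫ ω, η ω ∂μ = 0) (κ t : ℝ) (hκ : 0 < κ)
    (hint2 : Integrable (fun ω => η ω ^ 2 * Real.exp (η ω ^ 2 / κ)) μ)
    (hF : ∫ ω, η ω ^ 2 * Real.exp (η ω ^ 2 / κ) ∂μ ≤ κ / 2) :
    ∫ ω, Real.exp (t * η ω) ∂μ ≤ Real.exp (κ * t ^ 2 / 2) := by
  set c : ℝ := t ^ 2 / 2 * Real.exp (κ * t ^ 2 / 4) with hc
  have hc0 : 0 ≤ c := by positivity
  -- pointwise bound
  have hpt : ∀ ω, Real.exp (t * η ω) ≤ 1 + t * η ω + c * (η ω ^ 2 * Real.exp (η ω ^ 2 / κ)) := by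
    intro ω
    have h1 := exp_le_taylor (t * η ω)
    have h2 : |t * η ω| ≤ κ * t ^ 2 / 4 + η ω ^ 2 / κ := by
      rw [abs_mul]
      have hstep : 4 * κ * (|t| * |η ω|) ≤ κ ^ 2 * t ^ 2 + 4 * η ω ^ 2 := by
        nlinarith [sq_nonneg (κ * |t| - 2 * |η ω|), sq_abs t, sq_abs (η ω)]
      have h6 : |t| * |η ω| ≤ (κ ^ 2 * t ^ 2 + 4 * η ω ^ 2) / (4 * κ) := by
        rw [le_div_iff₀ (by positivity)]; linarith
      have h7 : (κ ^ 2 * t ^ 2 + 4 * η ω ^ 2) / (4 * κ) = κ * t ^ 2 / 4 + η ω ^ 2 / κ := by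
        field_simp
      linarith [h7 ▸ h6]
    have h3 : Real.exp |t * η ω| ≤ Real.exp (κ * t ^ 2 / 4) * Real.exp (η ω ^ 2 / κ) := by
      rw [← Real.exp_add]; exact Real.exp_le_exp.2 h2
    have h4 : (t * η ω) ^ 2 / 2 * Real.exp |t * η ω| ≤
        c * (η ω ^ 2 * Real.exp (η ω ^ 2 / κ)) := by
      have h5 : (t * η ω) ^ 2 / 2 = t ^ 2 / 2 * η ω ^ 2 := by ring
      calc (t * η ω) ^ 2 / 2 * Real.exp |t * η ω|
          ≤ (t * η ω) ^ 2 / 2 * (Real.exp (κ * t ^ 2 / 4) * Real.exp (η ω ^ 2 / κ)) := by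
            exact mul_le_mul_of_nonneg_left h3 (by positivity)
        _ = c * (η ω ^ 2 * Real.exp (η ω ^ 2 / κ)) := by rw [hc]; ring
    linarith
  -- RHS integrable
  have hRHS : Integrable (fun ω => 1 + t * η ω + c * (η ω ^ 2 * Real.exp (η ω ^ 2 / κ))) μ :=
    ((integrable_const 1).add (hη1.const_mul t)).add (hint2.const_mul c)
  -- LHS integrable
  have hLHS : Integrable (fun ω => Real.exp (t * η ω)) μ := by
    refine hRHS.mono ?_ (Filter.Eventually.of_forall fun ω => ?_)
    · exact (Real.continuous_exp.comp_aestronglyMeasurable (hηm.const_smul t)).congr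
        (Filter.Eventually.of_forall fun ω => by simp [smul_eq_mul])
    · have h1 := hpt ω
      have h2 : (0:ℝ) < Real.exp (t * η ω) := Real.exp_pos _
      rw [Real.norm_eq_abs, Real.norm_eq_abs, abs_of_pos h2, abs_of_pos (lt_of_lt_of_le h2 h1)]
      exact h1
  have hIineq : ∫ ω, Real.exp (t * η ω) ∂μ ≤
      ∫ ω, (1 + t * η ω + c * (η ω ^ 2 * Real.exp (η ω ^ 2 / κ))) ∂μ :=
    integral_mono hLHS hRHS hpt
  have hInt : ∫ ω, (1 + t * η ω + c * (η ω ^ 2 * Real.exp (η ω ^ 2 / κ))) ∂μ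
      = 1 + c * ∫ ω, η ω ^ 2 * Real.exp (η ω ^ 2 / κ) ∂μ := by
    have i1 : Integrable (fun ω => 1 + t * η ω) μ := by
      simpa using (integrable_const (1:ℝ)).add (hη1.const_mul t)
    rw [integral_add i1 (hint2.const_mul c),
      integral_add (integrable_const 1) (hη1.const_mul t), integral_const,
      integral_const_mul, integral_const_mul, hmean]
    simp
  rw [hInt] at hIineq
  -- final scalar inequality
  have hy : 0 ≤ κ * t ^ 2 / 4 := by positivity
  have hee := Real.add_one_le_exp (κ * t ^ 2 / 4)
  have hep := Real.exp_pos (κ * t ^ 2 / 4)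
  have hF' : c * ∫ ω, η ω ^ 2 * Real.exp (η ω ^ 2 / κ) ∂μ ≤ c * (κ / 2) := by
    refine mul_le_mul_of_nonneg_left hF hc0
  have hfin : 1 + c * (κ / 2) ≤ Real.exp (κ * t ^ 2 / 2) := by
    have h2 : Real.exp (κ * t ^ 2 / 2) = Real.exp (κ * t ^ 2 / 4) * Real.exp (κ * t ^ 2 / 4) := by
      rw [← Real.exp_add]; ring_nf
    rw [hc, h2]
    nlinarith
  linarith

/-- the centered truncation remainder `ε − ε^{(R)}` of a sub-Gaussian
random variable with a strong exponential moment is sub-Gaussian with a parameter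
`κ_R` tending to `0` as the truncation level `R → ∞`. -/
theorem stmt19 {Ω : Type*} {m0 : MeasurableSpace Ω} (μ : Measure Ω) [IsProbabilityMeasure μ]
    (ε : Ω → ℝ) (hmeas : Measurable ε)
    (hcent : ∫ ω, ε ω ∂μ = 0)
    (φ : ℝ) (hφ : 0 < φ)
    (hsub : ∀ t : ℝ, ∫ ω, Real.exp (t * ε ω) ∂μ ≤ Real.exp (φ * t ^ 2 / 2))
    (a t₀ : ℝ) (ha : 2 < a) (ht₀ : 0 < t₀)
    (hint : Integrable (fun ω => Real.exp (t₀ * |ε ω| ^ (2 * a))) μ)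
    (εR : ℝ → Ω → ℝ)
    (hεR : ∀ R ω, εR R ω =
      (if |ε ω| ≤ R then ε ω else 0) - ∫ ω', (if |ε ω'| ≤ R then ε ω' else 0) ∂μ) :
    ∃ κ : ℝ → ℝ, Tendsto κ atTop (nhds 0) ∧
      ∃ R₀ : ℝ, ∀ R ≥ R₀, ∀ t : ℝ,
        ∫ ω, Real.exp (t * (ε ω - εR R ω)) ∂μ ≤ Real.exp (κ R * t ^ 2 / 2) := by
  classical
  have hp : 2 < 2 * a := by linarith
  set E : Ω → ℝ := fun ω => Real.exp (t₀ * |ε ω| ^ (2 * a)) with hE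
  have hEnn : ∀ ω, 0 ≤ t₀ * |ε ω| ^ (2 * a) := fun ω => by positivity
  -- ε is integrable
  have hεint : Integrable ε μ := by
    obtain ⟨K, hK0, hKle⟩ := growth_sq t₀ (2 * a) 1 ht₀ hp zero_le_one
    refine (hint.const_mul (K + 2)).mono hmeas.aestronglyMeasurable
      (Filter.Eventually.of_forall fun ω => ?_)
    have h1 : |ε ω| ≤ 1 + |ε ω| ^ 2 := by nlinarith [sq_nonneg (|ε ω| - 1), abs_nonneg (ε ω)]
    have h2 := hKle |ε ω| (abs_nonneg _)
    have h3 := Real.add_one_le_exp (t₀ * |ε ω| ^ (2 * a))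
    have h4 := hEnn ω
    rw [Real.norm_eq_abs, Real.norm_eq_abs]
    rw [abs_of_nonneg (by positivity : (0:ℝ) ≤ (K + 2) * E ω)]
    have : (K + 2) * E ω ≥ (K + 2) * (1 + t₀ * |ε ω| ^ (2 * a)) := by
      refine mul_le_mul_of_nonneg_left (by linarith) (by linarith)
    nlinarith
  set C : ℝ := ∫ ω, |ε ω| ∂μ with hCdef
  have hC0 : 0 ≤ C := integral_nonneg fun ω => abs_nonneg _
  -- dominator integrability
  have hDom : ∀ c : ℝ, 0 ≤ c →
      Integrable (fun ω => (|ε ω| + C) ^ 2 * Real.exp (c * (|ε ω| + C) ^ 2)) μ := by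
    intro c hc
    obtain ⟨K, hK0, hKle⟩ := domB t₀ (2 * a) c C ht₀ hp hc hC0
    refine (hint.const_mul K).mono ?_ (Filter.Eventually.of_forall fun ω => ?_)
    · apply Measurable.aestronglyMeasurable
      have h1 : Measurable fun ω => (|ε ω| + C) ^ 2 := ((hmeas.abs.add_const C).pow_const 2)
      exact h1.mul ((h1.const_mul c).exp)
    · rw [Real.norm_eq_abs, Real.norm_eq_abs,
        abs_of_nonneg (by positivity : (0:ℝ) ≤ (|ε ω| + C) ^ 2 * Real.exp (c * (|ε ω| + C) ^ 2)),
        abs_of_nonneg (by positivity : (0:ℝ) ≤ K * E ω)]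
      exact hKle |ε ω| (abs_nonneg _)
  -- truncation
  set trunc : ℝ → Ω → ℝ := fun R ω => if |ε ω| ≤ R then ε ω else 0 with htrunc
  have htrunc_meas : ∀ R, Measurable (trunc R) := fun R =>
    Measurable.ite (measurableSet_le hmeas.abs measurable_const) hmeas measurable_const
  have htrunc_abs : ∀ R ω, |trunc R ω| ≤ |ε ω| := by
    intro R ω; rw [htrunc]; dsimp only; split_ifs <;> simp [abs_nonneg]
  have htrunc_int : ∀ R, Integrable (trunc R) μ := fun R =>
    hεint.mono (htrunc_meas R).aestronglyMeasurable
      (Filter.Eventually.of_forall fun ω => by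
        rw [Real.norm_eq_abs, Real.norm_eq_abs]; exact htrunc_abs R ω)
  set m : ℝ → ℝ := fun R => ∫ ω, trunc R ω ∂μ with hm
  have hm_abs : ∀ R, |m R| ≤ C := by
    intro R
    calc |m R| ≤ ∫ ω, |trunc R ω| ∂μ := by
          simpa [Real.norm_eq_abs] using norm_integral_le_integral_norm (trunc R) (μ := μ)
      _ ≤ ∫ ω, |ε ω| ∂μ := integral_mono (htrunc_int R).abs hεint.abs (fun ω => htrunc_abs R ω)
  -- the remainder
  set η : ℝ → Ω → ℝ := fun R ω => (ε ω - trunc R ω) + m R with hη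
  have hη_eq : ∀ R ω, ε ω - εR R ω = η R ω := by
    intro R ω; rw [hεR R ω, hη]; dsimp only; rw [htrunc, hm]; dsimp only; ring
  have hη_meas : ∀ R, Measurable (η R) := fun R =>
    ((hmeas.sub (htrunc_meas R)).add_const (m R))
  have hη_abs : ∀ R ω, |η R ω| ≤ |ε ω| + C := by
    intro R ω
    have h1 : |ε ω - trunc R ω| ≤ |ε ω| := by
      rw [htrunc]; dsimp only; split_ifs <;> simp [abs_nonneg]
    calc |η R ω| ≤ |ε ω - trunc R ω| + |m R| := abs_add_le _ _
      _ ≤ |ε ω| + C := add_le_add h1 (hm_abs R)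
  have hη_int : ∀ R, Integrable (η R) μ := by
    intro R
    have i3 : Integrable (fun ω => ε ω - trunc R ω) μ := hεint.sub (htrunc_int R)
    exact i3.add (integrable_const (m R))
  have hη_mean : ∀ R, ∫ ω, η R ω ∂μ = 0 := by
    intro R
    rw [hη]; dsimp only
    have i3 : Integrable (fun ω => ε ω - trunc R ω) μ := hεint.sub (htrunc_int R)
    rw [integral_add i3 (integrable_const (m R)),
      integral_sub hεint (htrunc_int R), hcent, integral_const]
    simp [hm]
  -- integrand integrability for every κ > 0
  have hsq_mono : ∀ (κ : ℝ), 0 < κ → ∀ (x y : ℝ), |x| ≤ y →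
      x ^ 2 * Real.exp (x ^ 2 / κ) ≤ y ^ 2 * Real.exp ((1/κ) * y ^ 2) := by
    intro κ hκ x y hxy
    have h0 : 0 ≤ y := le_trans (abs_nonneg x) hxy
    have h1 : x ^ 2 ≤ y ^ 2 := by nlinarith [abs_nonneg x, sq_abs x]
    have h2 : Real.exp (x ^ 2 / κ) ≤ Real.exp ((1/κ) * y ^ 2) := by
      apply Real.exp_le_exp.2
      rw [div_eq_mul_inv, one_div]
      calc x ^ 2 * κ⁻¹ ≤ y ^ 2 * κ⁻¹ := by
            exact mul_le_mul_of_nonneg_right h1 (by positivity)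
        _ = κ⁻¹ * y ^ 2 := by ring
    exact mul_le_mul h1 h2 (Real.exp_pos _).le (by positivity)
  have hint2 : ∀ (R κ : ℝ), 0 < κ →
      Integrable (fun ω => η R ω ^ 2 * Real.exp (η R ω ^ 2 / κ)) μ := by
    intro R κ hκ
    refine (hDom (1/κ) (by positivity)).mono ?_ (Filter.Eventually.of_forall fun ω => ?_)
    · apply Measurable.aestronglyMeasurable
      have h1 : Measurable fun ω => η R ω ^ 2 := (hη_meas R).pow_const 2
      exact h1.mul ((h1.div_const κ).exp)
    · rw [Real.norm_eq_abs, Real.norm_eq_abs,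
        abs_of_nonneg (by positivity : (0:ℝ) ≤ η R ω ^ 2 * Real.exp (η R ω ^ 2 / κ)),
        abs_of_nonneg (by positivity :
          (0:ℝ) ≤ (|ε ω| + C) ^ 2 * Real.exp ((1/κ) * (|ε ω| + C) ^ 2))]
      exact hsq_mono κ hκ _ _ (hη_abs R ω)
  -- convergence of m to 0
  have hm_to : Tendsto m atTop (nhds 0) := by
    have := tendsto_integral_filter_of_dominated_convergence (μ := μ)
      (F := trunc) (f := ε) (l := atTop) (fun ω => |ε ω|)
      (Filter.Eventually.of_forall fun R => (htrunc_meas R).aestronglyMeasurable)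
      (Filter.Eventually.of_forall fun R => Filter.Eventually.of_forall fun ω => by
        rw [Real.norm_eq_abs]; exact htrunc_abs R ω)
      hεint.abs
      (Filter.Eventually.of_forall fun ω => by
        apply Tendsto.congr' _ (tendsto_const_nhds (x := ε ω))
        filter_upwards [eventually_ge_atTop (|ε ω|)] with R hR
        rw [htrunc]; dsimp only; rw [if_pos hR])
    rw [hcent] at this
    exact this
  -- convergence of F(R, κ) to 0
  have hFto : ∀ κ : ℝ, 0 < κ →
      Tendsto (fun R => ∫ ω, η R ω ^ 2 * Real.exp (η R ω ^ 2 / κ) ∂μ) atTop (nhds 0) := by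
    intro κ hκ
    have hη_to : ∀ ω, Tendsto (fun R => η R ω) atTop (nhds 0) := by
      intro ω
      have h1 : Tendsto (fun R => ε ω - trunc R ω) atTop (nhds 0) := by
        apply Tendsto.congr' _ (tendsto_const_nhds (x := (0:ℝ)))
        filter_upwards [eventually_ge_atTop (|ε ω|)] with R hR
        rw [htrunc]; dsimp only; rw [if_pos hR]; ring
      have := h1.add hm_to
      simpa using this
    have hcont : Continuous fun x : ℝ => x ^ 2 * Real.exp (x ^ 2 / κ) := by fun_prop
    have := tendsto_integral_filter_of_dominated_convergence (μ := μ)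
      (F := fun R ω => η R ω ^ 2 * Real.exp (η R ω ^ 2 / κ)) (f := fun _ => (0:ℝ)) (l := atTop)
      (fun ω => (|ε ω| + C) ^ 2 * Real.exp ((1/κ) * (|ε ω| + C) ^ 2))
      (Filter.Eventually.of_forall fun R => by
        apply Measurable.aestronglyMeasurable
        have h1 : Measurable fun ω => η R ω ^ 2 := (hη_meas R).pow_const 2
        exact h1.mul ((h1.div_const κ).exp))
      (Filter.Eventually.of_forall fun R => Filter.Eventually.of_forall fun ω => by
        rw [Real.norm_eq_abs,
          abs_of_nonneg (by positivity : (0:ℝ) ≤ η R ω ^ 2 * Real.exp (η R ω ^ 2 / κ))]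
        exact hsq_mono κ hκ _ _ (hη_abs R ω))
      (hDom (1/κ) (by positivity))
      (Filter.Eventually.of_forall fun ω => by
        have := (hcont.tendsto 0).comp (hη_to ω)
        simpa [Function.comp_def] using this)
    simpa using this
  -- choice of thresholds
  have hchoice : ∀ n : ℕ, ∃ S : ℝ, ∀ R ≥ S,
      ∫ ω, η R ω ^ 2 * Real.exp (η R ω ^ 2 / (1/((n:ℝ)+1))) ∂μ ≤ (1/((n:ℝ)+1))/2 := by
    intro n
    have hpos : (0:ℝ) < 1/((n:ℝ)+1) := by positivity
    have := (hFto (1/((n:ℝ)+1)) hpos).eventually_lt_const (by positivity : (0:ℝ) < (1/((n:ℝ)+1))/2)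
    rw [eventually_atTop] at this
    obtain ⟨S, hS⟩ := this
    exact ⟨S, fun R hR => (hS R hR).le⟩
  set ψ : ℕ → ℝ := fun n => max (Classical.choose (hchoice n)) n with hψ
  have hψ1 : ∀ n : ℕ, ∀ R : ℝ, ψ n ≤ R →
      ∫ ω, η R ω ^ 2 * Real.exp (η R ω ^ 2 / (1/((n:ℝ)+1))) ∂μ ≤ (1/((n:ℝ)+1))/2 :=
    fun n R h => Classical.choose_spec (hchoice n) R (le_trans (le_max_left _ _) h)
  have hψ2 : ∀ n : ℕ, (n:ℝ) ≤ ψ n := fun n => le_max_right _ _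
  set κf : ℝ → ℝ := fun R => 1 / ((Nat.findGreatest (fun n => ψ n ≤ R) ⌈R⌉₊ : ℝ) + 1) with hκf
  have hκf_pos : ∀ R, 0 < κf R := fun R => by rw [hκf]; positivity
  have hκf_le : ∀ (n : ℕ) (R : ℝ), ψ n ≤ R → κf R ≤ 1/((n:ℝ)+1) := by
    intro n R hR
    have hnR : (n:ℝ) ≤ R := le_trans (hψ2 n) hR
    have hceil : n ≤ ⌈R⌉₊ := by
      have : (⌈(n:ℝ)⌉₊ : ℕ) ≤ ⌈R⌉₊ := Nat.ceil_le_ceil hnR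
      simpa using this
    have hge : n ≤ Nat.findGreatest (fun n => ψ n ≤ R) ⌈R⌉₊ := Nat.le_findGreatest hceil hR
    rw [hκf]
    dsimp only
    apply one_div_le_one_div_of_le (by positivity)
    have : (n:ℝ) ≤ (Nat.findGreatest (fun n => ψ n ≤ R) ⌈R⌉₊ : ℝ) := Nat.cast_le.2 hge
    linarith
  refine ⟨κf, ?_, ψ 0, ?_⟩
  · rw [NormedAddCommGroup.tendsto_nhds_zero]
    intro δ hδ
    obtain ⟨n, hn⟩ := exists_nat_one_div_lt hδ
    filter_upwards [eventually_ge_atTop (ψ n)] with R hR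
    rw [Real.norm_eq_abs, abs_of_pos (hκf_pos R)]
    exact lt_of_le_of_lt (hκf_le n R hR) hn
  · intro R hR t
    set N : ℕ := Nat.findGreatest (fun n => ψ n ≤ R) ⌈R⌉₊ with hN
    have hψN : ψ N ≤ R :=
      Nat.findGreatest_spec (P := fun n => ψ n ≤ R) (m := 0) (n := ⌈R⌉₊)
        (Nat.zero_le _) (show ψ 0 ≤ R from hR)
    have hFb := hψ1 N R hψN
    have hgoal : ∀ ω, ε ω - εR R ω = η R ω := hη_eq R
    calc ∫ ω, Real.exp (t * (ε ω - εR R ω)) ∂μ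
        = ∫ ω, Real.exp (t * η R ω) ∂μ := by
          congr 1; funext ω; rw [hgoal ω]
      _ ≤ Real.exp (κf R * t ^ 2 / 2) := by
          apply lemA μ (η R) (hη_meas R).aestronglyMeasurable (hη_int R) (hη_mean R)
            (κf R) t (hκf_pos R) (hint2 R (κf R) (hκf_pos R))
          have : κf R = 1/((N:ℝ)+1) := by rw [hκf]
          rw [this]
          exact hFb
end
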